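/- Let m and n be even integers with m ≥ 4 and n ≥ 4. For each vertex (y,z) of C_m □ C_n, let C_4(y,z) denote the 4-cycle subgraph with vertices (y,z), (y+1,z), (y+1,z+1), and (y,z+1) (coordinates mod m and mod n respectively). Then the set of 4-cycles { C_4(y,z) : y + z is even } is a C_4-decomposition of C_m □ C_n. -/

import Mathlib

open SimpleGraph

/-- `D` is a decomposition of the graph `G` into copies of the cycle graph `C_k`:
every subgraph in `D` is isomorphic to `C_k`, and every edge of `G` lies in the
edge set of exactly one member of `D`. -/
def IsCycleDecomposition {V : Type*} (G : SimpleGraph V) (k : ℕ)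
    (D : Set G.Subgraph) : Prop :=
  (∀ H ∈ D, Nonempty (H.coe ≃g cycleGraph k)) ∧
  ∀ e ∈ G.edgeSet, ∃! H : D, e ∈ (H : G.Subgraph).edgeSet

/-- The cycle `C_k` decomposes the graph `G`. -/
def CycleDecomposes (k : ℕ) {V : Type*} (G : SimpleGraph V) : Prop :=
  ∃ D : Set G.Subgraph, IsCycleDecomposition G k D

/-- The 4-cycle subgraph `C_4(y,z)` of the torus `C_m □ C_n`, with vertices
`(y,z)`, `(y+1,z)`, `(y+1,z+1)`, `(y,z+1)` (coordinates mod `m` and mod `n`). -/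
def checkerboardC4 (m n : ℕ) [NeZero m] [NeZero n] (y : Fin m) (z : Fin n) :
    (cycleGraph m □ cycleGraph n).Subgraph :=
  (⊤ : (cycleGraph m □ cycleGraph n).Subgraph).induce
    {(y, z), (y + 1, z), (y + 1, z + 1), (y, z + 1)}

section CheckerboardAux

variable {m n : ℕ} [NeZero m] [NeZero n]


lemma fin_one_val {m : ℕ} [NeZero m] (hm : 2 ≤ m) : (1 : Fin m).val = 1 := by
  simp [Fin.val_one', Nat.mod_eq_of_lt hm]

lemma fin_two_val {m : ℕ} [NeZero m] (hm : 3 ≤ m) : (2 : Fin m).val = 2 := by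
  have : (2 : Fin m).val = 2 % m := Fin.val_ofNat ..
  simpa [Nat.mod_eq_of_lt (by omega : 2 < m)] using this

lemma fin_ne_add_one {m : ℕ} [NeZero m] (hm : 2 ≤ m) (a : Fin m) : a ≠ a + 1 := by
  intro h
  have h0 : (1 : Fin m) = 0 := by
    have := congrArg (· - a) h.symm
    simpa using this
  have := congrArg Fin.val h0
  rw [fin_one_val hm] at this
  simp at this

lemma fin_add_two_ne {m : ℕ} [NeZero m] (hm : 3 ≤ m) (a : Fin m) : a + 2 ≠ a := by
  intro h
  have h0 : (2 : Fin m) = 0 := by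
    have := congrArg (· - a) h
    simpa [add_comm] using this
  have := congrArg Fin.val h0
  rw [fin_two_val hm] at this
  simp at this

lemma fin_add_one_add_one {m : ℕ} [NeZero m] (a : Fin m) : a + 1 + 1 = a + 2 := by
  rw [add_assoc, show (1 : Fin m) + 1 = 2 from Fin.ext (by rw [Fin.val_add]; simp [Fin.val_one', ← Nat.add_mod])]

lemma even_mod {m x : ℕ} (hme : Even m) : Even (x % m) ↔ Even x := by
  conv_rhs => rw [← Nat.mod_add_div x m]
  rw [Nat.even_add]
  simp [(hme.mul_right (x / m) : Even (m * (x/m)))]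

lemma fin_even_add_one {m : ℕ} [NeZero m] (hm : 2 ≤ m) (hme : Even m) (a : Fin m) :
    Even ((a + 1).val) ↔ ¬ Even a.val := by
  have h : (a + 1).val = (a.val + 1) % m := by
    rw [Fin.add_def, fin_one_val hm]
  rw [h, even_mod hme, Nat.even_add_one]

lemma cycle_adj_succ {m : ℕ} [NeZero m] (hm : 2 ≤ m) (a : Fin m) :
    (cycleGraph m).Adj a (a + 1) := by
  rw [cycleGraph_adj']
  right
  rw [add_sub_cancel_left, fin_one_val hm]

lemma cycle_adj_iff {m : ℕ} [NeZero m] (hm : 2 ≤ m) (a b : Fin m) :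
    (cycleGraph m).Adj a b ↔ b = a + 1 ∨ a = b + 1 := by
  rw [cycleGraph_adj']
  constructor
  · rintro (h | h)
    · right
      have h' : a - b = 1 := Fin.ext (by rw [h, fin_one_val hm])
      rw [sub_eq_iff_eq_add] at h'
      rw [h', add_comm]
    · left
      have h' : b - a = 1 := Fin.ext (by rw [h, fin_one_val hm])
      rw [sub_eq_iff_eq_add] at h'
      rw [h', add_comm]
  · rintro (h | h)
    · right; rw [h, add_sub_cancel_left, fin_one_val hm]
    · left; rw [h, add_sub_cancel_left, fin_one_val hm]

lemma square_iso (m n : ℕ) [NeZero m] [NeZero n] (hm : 4 ≤ m) (hn : 4 ≤ n)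
    (y : Fin m) (z : Fin n) :
    Nonempty ((checkerboardC4 m n y z).coe ≃g cycleGraph 4) := by
  have hm2 : 2 ≤ m := by omega
  have hn2 : 2 ≤ n := by omega
  have hy := fin_ne_add_one hm2 y
  have hz := fin_ne_add_one hn2 z
  have hay := cycle_adj_succ hm2 y
  have haz := cycle_adj_succ hn2 z
  set p : Fin 4 → Fin m × Fin n := ![(y,z),(y+1,z),(y+1,z+1),(y,z+1)] with hp
  have hmem : ∀ i, p i ∈ (checkerboardC4 m n y z).verts := by
    intro i; fin_cases i <;> simp [checkerboardC4, hp]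
  have key : ∀ i j : Fin 4, (checkerboardC4 m n y z).Adj (p i) (p j) ↔ (cycleGraph 4).Adj i j := by
    intro i j
    fin_cases i <;> fin_cases j <;>
      simp [checkerboardC4, Subgraph.induce_adj, boxProd_adj, hp, hy, hz, hy.symm, hz.symm,
        hay, haz, hay.symm, haz.symm, cycleGraph_adj, Prod.ext_iff] <;>
      decide
  let f : Fin 4 → ↥((checkerboardC4 m n y z).verts) := fun i => ⟨p i, hmem i⟩
  have hinj : Function.Injective f := by
    intro i j h
    have h' : p i = p j := congrArg Subtype.val h
    fin_cases i <;> fin_cases j <;>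
      first
        | rfl
        | simp [hp, Prod.ext_iff, hy, hy.symm, hz, hz.symm] at h'
  have hsurj : Function.Surjective f := by
    rintro ⟨v, hv⟩
    simp only [checkerboardC4, Subgraph.induce_verts, Set.mem_insert_iff,
      Set.mem_singleton_iff] at hv
    rcases hv with h | h | h | h
    exacts [⟨0, Subtype.ext (by simp [f, hp, h])⟩,
      ⟨1, Subtype.ext (by simp [f, hp, h])⟩,
      ⟨2, Subtype.ext (by simp [f, hp, h])⟩,
      ⟨3, Subtype.ext (by simp [f, hp, h])⟩]
  exact ⟨(RelIso.mk (Equiv.ofBijective f ⟨hinj, hsurj⟩)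
    (fun {i j} => by simp only [Equiv.ofBijective_apply, Subgraph.coe_adj]; exact key i j)).symm⟩


variable {m n : ℕ} [NeZero m] [NeZero n]

lemma horiz_unique (hm : 4 ≤ m) (hn : 4 ≤ n) (x y : Fin m) (c z : Fin n)
    (h : (checkerboardC4 m n y z).Adj (x, c) (x + 1, c)) :
    y = x ∧ (z = c ∨ z + 1 = c) := by
  have hm2 : 2 ≤ m := by omega
  have hn2 : 2 ≤ n := by omega
  have hm3 : 3 ≤ m := by omega
  simp only [checkerboardC4, Subgraph.induce_adj, Set.mem_insert_iff,
    Set.mem_singleton_iff, Prod.mk.injEq] at h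
  obtain ⟨hu, hv, -⟩ := h
  rcases hu with ⟨h1, h2⟩ | ⟨h1, h2⟩ | ⟨h1, h2⟩ | ⟨h1, h2⟩ <;>
    rcases hv with ⟨h3, h4⟩ | ⟨h3, h4⟩ | ⟨h3, h4⟩ | ⟨h3, h4⟩ <;>
    first
      | exact ⟨h1.symm, Or.inl h2.symm⟩
      | exact ⟨h1.symm, Or.inr h2.symm⟩
      | exact absurd (h3.trans h1.symm) (fin_ne_add_one hm2 x).symm
      | exact absurd (h2.symm.trans h4) (fin_ne_add_one hn2 z)
      | exact absurd (h4.symm.trans h2) (fin_ne_add_one hn2 z)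
      | exact absurd (show x + 2 = x by rw [← fin_add_one_add_one, h3, ← h1]) (fin_add_two_ne hm3 x)

lemma vert_unique (hm : 4 ≤ m) (hn : 4 ≤ n) (x y : Fin m) (c z : Fin n)
    (h : (checkerboardC4 m n y z).Adj (x, c) (x, c + 1)) :
    (y = x ∨ y + 1 = x) ∧ z = c := by
  have hm2 : 2 ≤ m := by omega
  have hn2 : 2 ≤ n := by omega
  have hn3 : 3 ≤ n := by omega
  simp only [checkerboardC4, Subgraph.induce_adj, Set.mem_insert_iff,
    Set.mem_singleton_iff, Prod.mk.injEq] at h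
  obtain ⟨hu, hv, -⟩ := h
  rcases hu with ⟨h1, h2⟩ | ⟨h1, h2⟩ | ⟨h1, h2⟩ | ⟨h1, h2⟩ <;>
    rcases hv with ⟨h3, h4⟩ | ⟨h3, h4⟩ | ⟨h3, h4⟩ | ⟨h3, h4⟩ <;>
    first
      | exact ⟨Or.inl h1.symm, h2.symm⟩
      | exact ⟨Or.inr h1.symm, h2.symm⟩
      | exact absurd (h4.trans h2.symm) (fin_ne_add_one hn2 c).symm
      | exact absurd (h1.symm.trans h3) (fin_ne_add_one hm2 y)
      | exact absurd (h3.symm.trans h1) (fin_ne_add_one hm2 y)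
      | exact absurd (show c + 2 = c by rw [← fin_add_one_add_one, h4, ← h2]) (fin_add_two_ne hn3 c)


variable {m n : ℕ} [NeZero m] [NeZero n]

lemma horiz_eu (hm : 4 ≤ m) (hn : 4 ≤ n) (hme : Even m) (hne : Even n)
    (x : Fin m) (c : Fin n) :
    ∃! H : ↥{H : (cycleGraph m □ cycleGraph n).Subgraph |
        ∃ (y : Fin m) (z : Fin n), Even (y.val + z.val) ∧ H = checkerboardC4 m n y z},
      s((x, c), (x + 1, c)) ∈ (H : (cycleGraph m □ cycleGraph n).Subgraph).edgeSet := by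
  have hm2 : 2 ≤ m := by omega
  have hn2 : 2 ≤ n := by omega
  have hadj : (cycleGraph m □ cycleGraph n).Adj (x, c) (x + 1, c) :=
    SimpleGraph.boxProd_adj.mpr (Or.inl ⟨cycle_adj_succ hm2 x, rfl⟩)
  by_cases hpar : Even (x.val + c.val)
  · refine ⟨⟨checkerboardC4 m n x c, ⟨x, c, hpar, rfl⟩⟩, ?_, ?_⟩
    · refine Subgraph.mem_edgeSet.mpr ?_
      simp only [checkerboardC4, Subgraph.induce_adj, Subgraph.top_adj]
      exact ⟨by simp, by simp, hadj⟩
    · rintro ⟨H, y, z, hpz, rfl⟩ hmem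
      rw [Subgraph.mem_edgeSet] at hmem
      obtain ⟨hyx, hzc⟩ := horiz_unique hm hn x y c z hmem
      subst hyx
      apply Subtype.ext
      rcases hzc with rfl | hzc
      · rfl
      · exfalso
        rw [← hzc, Nat.even_add, fin_even_add_one hn2 hne z] at hpar
        rw [Nat.even_add] at hpz
        tauto
  · have h1 := fin_even_add_one hn2 hne (c - 1)
    rw [sub_add_cancel] at h1
    have hpar' : Even (x.val + (c - 1).val) := by
      rw [Nat.even_add] at hpar ⊢
      tauto
    refine ⟨⟨checkerboardC4 m n x (c - 1), ⟨x, c - 1, hpar', rfl⟩⟩, ?_, ?_⟩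
    · refine Subgraph.mem_edgeSet.mpr ?_
      simp only [checkerboardC4, Subgraph.induce_adj, Subgraph.top_adj]
      exact ⟨by simp [sub_add_cancel], by simp [sub_add_cancel], hadj⟩
    · rintro ⟨H, y, z, hpz, rfl⟩ hmem
      rw [Subgraph.mem_edgeSet] at hmem
      obtain ⟨hyx, hzc⟩ := horiz_unique hm hn x y c z hmem
      subst hyx
      apply Subtype.ext
      rcases hzc with rfl | hzc
      · exact absurd hpz hpar
      · have hz : z = c - 1 := by rw [← hzc, add_sub_cancel_right]
        subst hz
        rfl

lemma vert_eu (hm : 4 ≤ m) (hn : 4 ≤ n) (hme : Even m) (hne : Even n)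
    (x : Fin m) (c : Fin n) :
    ∃! H : ↥{H : (cycleGraph m □ cycleGraph n).Subgraph |
        ∃ (y : Fin m) (z : Fin n), Even (y.val + z.val) ∧ H = checkerboardC4 m n y z},
      s((x, c), (x, c + 1)) ∈ (H : (cycleGraph m □ cycleGraph n).Subgraph).edgeSet := by
  have hm2 : 2 ≤ m := by omega
  have hn2 : 2 ≤ n := by omega
  have hadj : (cycleGraph m □ cycleGraph n).Adj (x, c) (x, c + 1) :=
    SimpleGraph.boxProd_adj.mpr (Or.inr ⟨cycle_adj_succ hn2 c, rfl⟩)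
  by_cases hpar : Even (x.val + c.val)
  · refine ⟨⟨checkerboardC4 m n x c, ⟨x, c, hpar, rfl⟩⟩, ?_, ?_⟩
    · refine Subgraph.mem_edgeSet.mpr ?_
      simp only [checkerboardC4, Subgraph.induce_adj, Subgraph.top_adj]
      exact ⟨by simp, by simp, hadj⟩
    · rintro ⟨H, y, z, hpz, rfl⟩ hmem
      rw [Subgraph.mem_edgeSet] at hmem
      obtain ⟨hyx, hzc⟩ := vert_unique hm hn x y c z hmem
      subst hzc
      apply Subtype.ext
      rcases hyx with rfl | hyx
      · rfl
      · exfalso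
        rw [← hyx, Nat.even_add, fin_even_add_one hm2 hme y] at hpar
        rw [Nat.even_add] at hpz
        tauto
  · have h1 := fin_even_add_one hm2 hme (x - 1)
    rw [sub_add_cancel] at h1
    have hpar' : Even ((x - 1).val + c.val) := by
      rw [Nat.even_add] at hpar ⊢
      tauto
    refine ⟨⟨checkerboardC4 m n (x - 1) c, ⟨x - 1, c, hpar', rfl⟩⟩, ?_, ?_⟩
    · refine Subgraph.mem_edgeSet.mpr ?_
      simp only [checkerboardC4, Subgraph.induce_adj, Subgraph.top_adj]
      exact ⟨by simp [sub_add_cancel], by simp [sub_add_cancel], hadj⟩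
    · rintro ⟨H, y, z, hpz, rfl⟩ hmem
      rw [Subgraph.mem_edgeSet] at hmem
      obtain ⟨hyx, hzc⟩ := vert_unique hm hn x y c z hmem
      subst hzc
      apply Subtype.ext
      rcases hyx with rfl | hyx
      · exact absurd hpz hpar
      · have hy : y = x - 1 := by rw [← hyx, add_sub_cancel_right]
        subst hy
        rfl


end CheckerboardAux

theorem checkerboard_is_c4_decomposition (m n : ℕ) [NeZero m] [NeZero n]
    (hm : 4 ≤ m) (hn : 4 ≤ n) (hme : Even m) (hne : Even n) :
    IsCycleDecomposition (cycleGraph m □ cycleGraph n) 4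
      {H | ∃ (y : Fin m) (z : Fin n), Even (y.val + z.val) ∧
        H = checkerboardC4 m n y z} := by
  constructor
  · rintro H ⟨y, z, -, rfl⟩
    exact square_iso m n hm hn y z
  · intro e
    induction e using Sym2.ind with
    | _ u v =>
      intro he
      obtain ⟨a, b⟩ := u
      obtain ⟨c, d⟩ := v
      rw [mem_edgeSet, boxProd_adj] at he
      have hm2 : 2 ≤ m := by omega
      have hn2 : 2 ≤ n := by omega
      rcases he with ⟨hadj, heq⟩ | ⟨hadj, heq⟩
      · dsimp only at heq hadj
        subst heq
        rcases (cycle_adj_iff hm2 a c).mp hadj with rfl | rfl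
        · exact horiz_eu hm hn hme hne a b
        · rw [Sym2.eq_swap]
          exact horiz_eu hm hn hme hne c b
      · dsimp only at heq hadj
        subst heq
        rcases (cycle_adj_iff hn2 b d).mp hadj with rfl | rfl
        · exact vert_eu hm hn hme hne a b
        · rw [Sym2.eq_swap]
          exact vert_eu hm hn hme hne a d
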